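/- Let (P, dist) be a finite metric space whose doubling dimension is at most d, i.e., for every p ∈ P and every real R > 0 the ball ball_P(p,R) can be covered by at most 2^d balls in P of radius R/2 centered at points of P. Let S be a subset of P of size n, let μ ≥ 1 be a real number, and set c = 2(8μ)^d. If n ≥ c + 1, then there exist a point p ∈ S and a real number R' > 0 such that |ball_S(p,R')| ≥ n/c and |ball_S(p, μR')| ≤ n/2. -/

import Mathlib

/-- Iterating the doubling property `k` times: a ball of radius `R` can be
covered by at most `(2^d)^k` balls of radius `R / 2^k`. -/
lemma cover_iter {P : Type*} [MetricSpace P] (d : ℝ)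
    (hdoub : ∀ (p : P) (R : ℝ), 0 < R → ∃ C : Finset P,
      (C.card : ℝ) ≤ (2 : ℝ) ^ d ∧
      Metric.closedBall p R ⊆ ⋃ c ∈ C, Metric.closedBall c (R / 2))
    (k : ℕ) (p : P) (R : ℝ) (hR : 0 < R) :
    ∃ C : Finset P, (C.card : ℝ) ≤ ((2 : ℝ) ^ d) ^ k ∧
      Metric.closedBall p R ⊆ ⋃ c ∈ C, Metric.closedBall c (R / 2 ^ k) := by
  classical
  induction k with
  | zero =>
    refine ⟨{p}, by simp, ?_⟩
    simp
  | succ k ih =>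
    obtain ⟨C, hCcard, hCsub⟩ := ih
    have hpos : (0 : ℝ) < R / 2 ^ k := by positivity
    choose D hDcard hDsub using fun c : P => hdoub c (R / 2 ^ k) hpos
    refine ⟨C.biUnion D, ?_, ?_⟩
    · have h1 : ((C.biUnion D).card : ℝ) ≤ ∑ cc ∈ C, ((D cc).card : ℝ) := by
        have := Finset.card_biUnion_le (s := C) (t := D)
        exact_mod_cast this
      have h2 : ∑ cc ∈ C, ((D cc).card : ℝ) ≤ ∑ _cc ∈ C, (2 : ℝ) ^ d :=
        Finset.sum_le_sum fun cc _ => hDcard cc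
      have h3 : ∑ _cc ∈ C, (2 : ℝ) ^ d = (C.card : ℝ) * (2 : ℝ) ^ d := by
        simp [Finset.sum_const, mul_comm]
      have h4 : (C.card : ℝ) * (2 : ℝ) ^ d ≤ ((2 : ℝ) ^ d) ^ k * (2 : ℝ) ^ d := by
        have : (0 : ℝ) ≤ (2 : ℝ) ^ d := Real.rpow_nonneg (by norm_num) d
        exact mul_le_mul_of_nonneg_right hCcard this
      calc ((C.biUnion D).card : ℝ) ≤ ∑ cc ∈ C, ((D cc).card : ℝ) := h1
        _ ≤ (C.card : ℝ) * (2 : ℝ) ^ d := h2.trans (le_of_eq h3)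
        _ ≤ ((2 : ℝ) ^ d) ^ k * (2 : ℝ) ^ d := h4
        _ = ((2 : ℝ) ^ d) ^ (k + 1) := by ring
    · intro x hx
      obtain ⟨cc, hcc, hxcc⟩ := Set.mem_iUnion₂.mp (hCsub hx)
      obtain ⟨cc', hcc', hxcc'⟩ := Set.mem_iUnion₂.mp (hDsub cc hxcc)
      refine Set.mem_iUnion₂.mpr ⟨cc', Finset.mem_biUnion.mpr ⟨cc, hcc, hcc'⟩, ?_⟩
      have : R / 2 ^ k / 2 = R / 2 ^ (k + 1) := by ring
      rwa [this] at hxcc'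

/-- **Separating annulus (Har-Peled and Mendel).** Let `(P, dist)` be a finite
metric space of doubling dimension at most `d`, let `S ⊆ P` have `n` points,
let `μ ≥ 1` and `c = 2 (8μ)^d`. If `n ≥ c + 1`, then there exist a point `p ∈ S`
and a real `R' > 0` such that `|ball_S(p, R')| ≥ n / c` and
`|ball_S(p, μ R')| ≤ n / 2`. -/
theorem separating_annulus {P : Type*} [MetricSpace P] [Fintype P]
    (d : ℝ) (hd : 1 ≤ d)
    (hdoub : ∀ (p : P) (R : ℝ), 0 < R → ∃ C : Finset P,
      (C.card : ℝ) ≤ (2 : ℝ) ^ d ∧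
      Metric.closedBall p R ⊆ ⋃ c ∈ C, Metric.closedBall c (R / 2))
    (S : Finset P) (n : ℕ) (hn : S.card = n)
    (μ : ℝ) (hμ : 1 ≤ μ)
    (c : ℝ) (hc : c = 2 * (8 * μ) ^ d)
    (hnc : c + 1 ≤ (n : ℝ)) :
    ∃ p ∈ S, ∃ R' : ℝ, 0 < R' ∧
      (n : ℝ) / c ≤ ((S.filter fun x => dist p x ≤ R').card : ℝ) ∧
      ((S.filter fun x => dist p x ≤ μ * R').card : ℝ) ≤ (n : ℝ) / 2 := by
  classical
  -- basic numeric facts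
  have hμ0 : (0 : ℝ) < μ := lt_of_lt_of_le one_pos hμ
  have h8μ : (8 : ℝ) ≤ 8 * μ := by nlinarith
  have h8μd : (8 : ℝ) ≤ (8 * μ) ^ d := by
    calc (8 : ℝ) = (8 * μ) ^ (1 : ℝ) * (8 / (8 * μ)) := by
          field_simp
          simp
        _ ≤ (8 * μ) ^ (1 : ℝ) * 1 := by
          apply mul_le_mul_of_nonneg_left
          · rw [div_le_one (by positivity)]; exact h8μ
          · positivity
        _ = 8 * μ := by rw [Real.rpow_one]; ring
        _ ≤ (8 * μ) ^ d := by
          calc (8 : ℝ) * μ = (8 * μ) ^ (1 : ℝ) := (Real.rpow_one _).symm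
            _ ≤ (8 * μ) ^ d := Real.rpow_le_rpow_of_exponent_le (by linarith) hd
  have hcpos : (0 : ℝ) < c := by rw [hc]; positivity
  have hc16 : (16 : ℝ) ≤ c := by rw [hc]; linarith
  have hn17 : (17 : ℝ) ≤ (n : ℝ) := by linarith
  have hnpos : 0 < n := by exact_mod_cast lt_of_lt_of_le (by norm_num : (0:ℝ) < 17) hn17
  have hSne : S.Nonempty := Finset.card_pos.mp (hn ▸ hnpos)
  -- the ball-counting function
  set B : P → ℝ → ℕ := fun p r => (S.filter fun x => dist p x ≤ r).card with hB
  -- "good" radii and the finite set of candidate radii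
  set good : ℝ → Prop := fun r => ∃ p ∈ S, n ≤ 2 * B p r with hgood
  set F : Finset ℝ := (S ×ˢ S).image fun pq => dist pq.1 pq.2 with hF
  set G : Finset ℝ := F.filter good with hG
  -- G is nonempty
  obtain ⟨p0, hp0⟩ := hSne
  have hGne : G.Nonempty := by
    set r0 : ℝ := ((S.image fun x => dist p0 x).max' (by
      exact (Finset.Nonempty.image ⟨p0, hp0⟩ _))) with hr0
    obtain ⟨x0, hx0, hx0e⟩ := Finset.mem_image.mp
      ((S.image fun x => dist p0 x).max'_mem (Finset.Nonempty.image ⟨p0, hp0⟩ _))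
    refine ⟨r0, Finset.mem_filter.mpr ⟨?_, ⟨p0, hp0, ?_⟩⟩⟩
    · exact Finset.mem_image.mpr ⟨(p0, x0), Finset.mem_product.mpr ⟨hp0, hx0⟩, hx0e⟩
    · have : S.filter (fun x => dist p0 x ≤ r0) = S := by
        apply Finset.filter_true_of_mem
        intro x hx
        exact Finset.le_max' _ _ (Finset.mem_image.mpr ⟨x, hx, rfl⟩)
      simp only [hB, this, hn]
      omega
  set r : ℝ := G.min' hGne with hr
  have hrG : r ∈ G := G.min'_mem hGne
  have hrgood : good r := (Finset.mem_filter.mp hrG).2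
  -- minimality: any strictly smaller radius is not good
  have hmin : ∀ q ∈ S, ∀ r' : ℝ, 0 ≤ r' → r' < r → 2 * B q r' < n := by
    intro q hq r' hr'0 hr'lt
    by_contra hcon
    push_neg at hcon
    have hqmem : q ∈ S.filter fun x => dist q x ≤ r' := by
      simp [Finset.mem_filter, hq, hr'0]
    have hTne : (S.filter fun x => dist q x ≤ r').Nonempty := ⟨q, hqmem⟩
    set r'' : ℝ := (((S.filter fun x => dist q x ≤ r').image fun x => dist q x).max'
      (hTne.image _)) with hr''
    obtain ⟨x0, hx0, hx0e⟩ := Finset.mem_image.mp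
      (((S.filter fun x => dist q x ≤ r').image fun x => dist q x).max'_mem (hTne.image _))
    have hx0S : x0 ∈ S := (Finset.mem_filter.mp hx0).1
    have hr''le : r'' ≤ r' := by
      rw [hr'', ← hx0e]; exact (Finset.mem_filter.mp hx0).2
    have hsub : (S.filter fun x => dist q x ≤ r') ⊆ S.filter fun x => dist q x ≤ r'' := by
      intro x hx
      refine Finset.mem_filter.mpr ⟨(Finset.mem_filter.mp hx).1, ?_⟩
      exact Finset.le_max' _ _ (Finset.mem_image.mpr ⟨x, hx, rfl⟩)
    have hgood'' : good r'' := by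
      refine ⟨q, hq, le_trans hcon ?_⟩
      have hBle : B q r' ≤ B q r'' := Finset.card_le_card hsub
      omega
    have hr''G : r'' ∈ G := by
      refine Finset.mem_filter.mpr ⟨?_, hgood''⟩
      exact Finset.mem_image.mpr ⟨(q, x0), Finset.mem_product.mpr ⟨hq, hx0S⟩, hx0e⟩
    have := G.min'_le _ hr''G
    linarith
  -- r > 0
  have hrpos : 0 < r := by
    by_contra hcon
    push_neg at hcon
    obtain ⟨p1, hp1, hp1n⟩ := hrgood
    have hsub : (S.filter fun x => dist p1 x ≤ r) ⊆ {p1} := by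
      intro x hx
      have h1 := (Finset.mem_filter.mp hx).2
      have : dist p1 x = 0 := le_antisymm (h1.trans hcon) dist_nonneg
      simp [Finset.mem_singleton, (dist_eq_zero.mp this).symm]
    have hle : B p1 r ≤ 1 := by
      have := Finset.card_le_card hsub
      simpa using this
    have : (n : ℝ) ≤ 2 := by
      have : n ≤ 2 := by omega
      exact_mod_cast this
    linarith
  -- restate the key facts without the local definitions, then clear them
  have hmin2 : ∀ q ∈ S, ∀ r' : ℝ, 0 ≤ r' → r' < r →
      2 * (S.filter fun x => dist q x ≤ r').card < n := hmin
  have hgood2 : ∃ p ∈ S, n ≤ 2 * (S.filter fun x => dist p x ≤ r).card := hrgood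
  clear hmin hrgood hrG hp0
  clear_value r
  clear hr hG hGne G hF F hgood good hB B p0
  -- choose k minimal with 4μ ≤ 2^k
  have hkex : ∃ k : ℕ, 4 * μ ≤ (2 : ℝ) ^ k ∧ (2 : ℝ) ^ k ≤ 8 * μ := by
    have hex : ∃ k : ℕ, 4 * μ ≤ (2 : ℝ) ^ k := by
      obtain ⟨k, hk⟩ := pow_unbounded_of_one_lt (4 * μ) (by norm_num : (1:ℝ) < 2)
      exact ⟨k, hk.le⟩
    refine ⟨Nat.find hex, Nat.find_spec hex, ?_⟩
    rcases Nat.eq_zero_or_pos (Nat.find hex) with h0 | hpos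
    · rw [h0]; norm_num; linarith
    · obtain ⟨m, hm⟩ := Nat.exists_eq_succ_of_ne_zero hpos.ne'
      have hmlt : m < Nat.find hex := by omega
      have h2 := Nat.find_min hex hmlt
      push_neg at h2
      have he : (2:ℝ) ^ Nat.find hex = 2 * 2 ^ m := by rw [hm, pow_succ]; ring
      rw [he]
      linarith
  obtain ⟨k, hk4μ, hk8μ⟩ := hkex
  -- cover the good ball
  obtain ⟨p1, hp1, hp1n⟩ := hgood2
  obtain ⟨C, hCcard, hCsub⟩ := cover_iter d hdoub k p1 r hrpos
  have hCbound : (C.card : ℝ) ≤ (8 * μ) ^ d := by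
    have h1 : ((2 : ℝ) ^ d) ^ k = ((2 : ℝ) ^ k) ^ d := by
      rw [← Real.rpow_natCast ((2:ℝ)^d) k, ← Real.rpow_natCast (2:ℝ) k,
        ← Real.rpow_mul (by norm_num), ← Real.rpow_mul (by norm_num), mul_comm]
    have h2 : ((2 : ℝ) ^ k) ^ d ≤ (8 * μ) ^ d :=
      Real.rpow_le_rpow (by positivity) hk8μ (by linarith)
    calc (C.card : ℝ) ≤ ((2 : ℝ) ^ d) ^ k := hCcard
      _ = ((2 : ℝ) ^ k) ^ d := h1
      _ ≤ (8 * μ) ^ d := h2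
  -- the good ball is inside the union of small balls intersected with S
  set T : Finset P := S.filter fun x => dist p1 x ≤ r with hT
  have hTsub : T ⊆ C.biUnion fun cc => S.filter fun x => dist cc x ≤ r / 2 ^ k := by
    intro x hx
    have hxS : x ∈ S := (Finset.mem_filter.mp hx).1
    have hxball : x ∈ Metric.closedBall p1 r := by
      rw [Metric.mem_closedBall, dist_comm]
      exact (Finset.mem_filter.mp hx).2
    obtain ⟨cc, hcc, hxcc⟩ := Set.mem_iUnion₂.mp (hCsub hxball)
    refine Finset.mem_biUnion.mpr ⟨cc, hcc, Finset.mem_filter.mpr ⟨hxS, ?_⟩⟩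
    rw [dist_comm]
    exact Metric.mem_closedBall.mp hxcc
  have hTcard : (n : ℝ) ≤ 2 * (T.card : ℝ) := by exact_mod_cast hp1n
  have hTpos : (0 : ℝ) < (T.card : ℝ) := by linarith
  have hsum : (T.card : ℝ) ≤ ∑ cc ∈ C, ((S.filter fun x => dist cc x ≤ r / 2 ^ k).card : ℝ) := by
    calc (T.card : ℝ) ≤ ((C.biUnion fun cc => S.filter fun x => dist cc x ≤ r / 2 ^ k).card : ℝ) := by
          exact_mod_cast Finset.card_le_card hTsub
      _ ≤ ∑ cc ∈ C, ((S.filter fun x => dist cc x ≤ r / 2 ^ k).card : ℝ) := by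
          exact_mod_cast Finset.card_biUnion_le
  have hCne : C.Nonempty := by
    rcases Finset.eq_empty_or_nonempty C with h | h
    · exfalso
      rw [h] at hsum
      simp only [Finset.sum_empty] at hsum
      linarith
    · exact h
  have hCpos : (0 : ℝ) < (C.card : ℝ) := by exact_mod_cast Finset.card_pos.mpr hCne
  -- pigeonhole: some small ball contains many points of S
  have hpig : ∃ cc ∈ C,
      (n : ℝ) / (2 * C.card) ≤ ((S.filter fun x => dist cc x ≤ r / 2 ^ k).card : ℝ) := by
    by_contra hcon
    push_neg at hcon
    have : ∑ cc ∈ C, ((S.filter fun x => dist cc x ≤ r / 2 ^ k).card : ℝ) <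
        ∑ _cc ∈ C, (n : ℝ) / (2 * C.card) :=
      Finset.sum_lt_sum_of_nonempty hCne fun cc hcc => hcon cc hcc
    rw [Finset.sum_const, nsmul_eq_mul] at this
    have hC0 : (C.card : ℝ) ≠ 0 := ne_of_gt hCpos
    have heq : (C.card : ℝ) * ((n : ℝ) / (2 * C.card)) = (n : ℝ) / 2 := by
      rw [← div_div, mul_comm, div_mul_cancel₀ _ hC0]
    rw [heq] at this
    linarith
  obtain ⟨cc, hccC, hccbig⟩ := hpig
  -- lower bound n/c for that ball
  have hlow : (n : ℝ) / c ≤ ((S.filter fun x => dist cc x ≤ r / 2 ^ k).card : ℝ) := by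
    refine le_trans ?_ hccbig
    apply div_le_div_of_nonneg_left (by linarith) (by positivity)
    rw [hc]; nlinarith
  -- the ball is nonempty; pick q in it
  have hballpos : (0 : ℝ) < ((S.filter fun x => dist cc x ≤ r / 2 ^ k).card : ℝ) := by
    have : (0:ℝ) < (n : ℝ) / c := by positivity
    linarith
  have hballne : (S.filter fun x => dist cc x ≤ r / 2 ^ k).Nonempty := by
    rw [← Finset.card_pos]; exact_mod_cast hballpos
  obtain ⟨q, hq⟩ := hballne
  have hqS : q ∈ S := (Finset.mem_filter.mp hq).1
  have hqd : dist cc q ≤ r / 2 ^ k := (Finset.mem_filter.mp hq).2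
  -- the R' we output
  refine ⟨q, hqS, r / (2 * μ), by positivity, ?_, ?_⟩
  · -- lower bound
    have hsub2 : (S.filter fun x => dist cc x ≤ r / 2 ^ k) ⊆
        S.filter fun x => dist q x ≤ r / (2 * μ) := by
      intro x hx
      refine Finset.mem_filter.mpr ⟨(Finset.mem_filter.mp hx).1, ?_⟩
      have h1 : dist cc x ≤ r / 2 ^ k := (Finset.mem_filter.mp hx).2
      have h2 : dist q x ≤ dist q cc + dist cc x := dist_triangle q cc x
      have h3 : dist q cc ≤ r / 2 ^ k := by rwa [dist_comm]
      have h4 : r / 2 ^ k ≤ r / (4 * μ) := by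
        apply div_le_div_of_nonneg_left hrpos.le (by positivity) hk4μ
      have h5 : r / (4 * μ) + r / (4 * μ) = r / (2 * μ) := by field_simp; ring
      linarith
    calc (n : ℝ) / c ≤ ((S.filter fun x => dist cc x ≤ r / 2 ^ k).card : ℝ) := hlow
      _ ≤ ((S.filter fun x => dist q x ≤ r / (2 * μ)).card : ℝ) := by
          exact_mod_cast Finset.card_le_card hsub2
  · -- upper bound
    have heq : μ * (r / (2 * μ)) = r / 2 := by field_simp
    rw [heq]
    have := hmin2 q hqS (r / 2) (by positivity) (by linarith)
    have h2 : 2 * ((S.filter fun x => dist q x ≤ r / 2).card : ℝ) < (n : ℝ) := by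
      exact_mod_cast this
    linarith
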